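/- arXiv:2505.01687 — 2 statements merged into one kernel-verified Lean document; each statement's English description precedes it below -/
import Mathlib

section
/- Let X and Y be independent exponential random variables with rate 1, let p_V, L_V, p_I, L_I, σ², D, B, τ₀ > 0, and define γ = (p_V L_V X)/(p_I L_I Y + σ²) and the delay τ = D/(B log₂(1+γ)). Then the hazard rate Λ(τ₀) = lim_{Δτ→0⁺} P{τ₀ ≤ τ ≤ τ₀+Δτ} / (Δτ · P{τ ≥ τ₀}) exists and equals D_V · e^{−a γ_V} · (b + a(1 + b γ_V)) / [(1 + b γ_V)(1 + b γ_V − e^{−a γ_V})], where a = σ²/(p_V L_V), b = p_I L_I/(p_V L_V), γ_V = 2^{D/(Bτ₀)} − 1, and D_V = (ln 2 · D · 2^{D/(Bτ₀)})/(B τ₀²). -/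
open MeasureTheory ProbabilityTheory Real Filter Topology Set

lemma expMeasure_withDensity : expMeasure 1 = volume.withDensity (exponentialPDF 1) := rfl

lemma expMeasure_Iic (c : ℝ) :
    expMeasure 1 (Iic c) = ENNReal.ofReal (if 0 ≤ c then 1 - Real.exp (-c) else 0) := by
  rw [expMeasure_withDensity, withDensity_apply _ measurableSet_Iic]
  simpa using lintegral_exponentialPDF_eq_antiDeriv one_pos c

lemma expMeasure_singleton (c : ℝ) : expMeasure 1 {c} = 0 :=
  (withDensity_absolutelyContinuous volume _) (measure_singleton c)

-- ∫ y in Ioi 0, exp (-(c*y)) = 1/c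
lemma integral_exp_neg_mul_Ioi {c : ℝ} (hc : 0 < c) :
    ∫ y in Ioi (0:ℝ), Real.exp (-(c * y)) = 1 / c := by
  have := integral_comp_mul_left_Ioi (fun x => Real.exp (-x)) 0 hc
  simp only [mul_zero] at this
  rw [show (fun y => Real.exp (-(c*y))) = (fun y => (fun x => Real.exp (-x)) (c * y)) from rfl,
    this, integral_exp_neg_Ioi_zero]
  simp [one_div]

lemma prod_cdf {a b s : ℝ} (ha : 0 < a) (hb : 0 < b) (hs : 0 < s) :
    ((expMeasure 1).prod (expMeasure 1)) {p : ℝ × ℝ | p.2 ≤ s * (b * p.1 + a)}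
      = ENNReal.ofReal (1 - Real.exp (-(a * s)) / (1 + b * s)) := by
  have hprob : IsProbabilityMeasure (expMeasure 1) := isProbabilityMeasure_expMeasure one_pos
  have hset : MeasurableSet {p : ℝ × ℝ | p.2 ≤ s * (b * p.1 + a)} :=
    measurableSet_le measurable_snd (by fun_prop)
  rw [Measure.prod_apply hset]
  have hsec : ∀ y : ℝ, (Prod.mk y ⁻¹' {p : ℝ × ℝ | p.2 ≤ s * (b * p.1 + a)}) =
      Iic (s * (b * y + a)) := fun y => rfl
  simp_rw [hsec, expMeasure_Iic]
  have hpdfm : Measurable (exponentialPDF 1) := by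
    unfold exponentialPDF; exact (measurable_exponentialPDFReal 1).ennreal_ofReal
  rw [expMeasure_withDensity, lintegral_withDensity_eq_lintegral_mul _ hpdfm
    (Measurable.ennreal_ofReal (Measurable.ite
      (measurableSet_le measurable_const (by fun_prop)) (by fun_prop) measurable_const))]
  have hae : (fun y => exponentialPDF 1 y *
        ENNReal.ofReal (if 0 ≤ s * (b * y + a) then 1 - Real.exp (-(s * (b * y + a))) else 0))
      =ᵐ[volume] (Ioi (0:ℝ)).indicator
        (fun y => ENNReal.ofReal ((1 - Real.exp (-(s * (b * y + a)))) * Real.exp (-y))) := by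
    filter_upwards [compl_mem_ae_iff.2 (measure_singleton (0:ℝ))] with y hy
    rcases lt_or_gt_of_ne (show y ≠ 0 from hy) with hneg | hpos
    · rw [exponentialPDF_of_neg hneg, zero_mul, Set.indicator_of_notMem (by simpa using hneg.le)]
    · have hcy : 0 < s * (b * y + a) := by positivity
      rw [exponentialPDF_of_nonneg hpos.le, Set.indicator_of_mem (Set.mem_Ioi.mpr hpos), if_pos hcy.le,
        ← ENNReal.ofReal_mul (by positivity)]
      congr 1
      rw [one_mul, one_mul]
      ring
  simp only [Pi.mul_apply]
  rw [lintegral_congr_ae hae, lintegral_indicator measurableSet_Ioi]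
  have hexp_int : IntegrableOn (fun y => Real.exp (-y)) (Ioi (0:ℝ)) := by
    simpa using exp_neg_integrableOn_Ioi (a := 0) (b := 1) one_pos
  have hint : IntegrableOn
      (fun y => (1 - Real.exp (-(s * (b * y + a)))) * Real.exp (-y)) (Ioi (0:ℝ)) := by
    refine MeasureTheory.Integrable.mono hexp_int ?_ ?_
    · exact (Continuous.mul (by fun_prop) (by fun_prop)).aestronglyMeasurable
    · filter_upwards [self_mem_ae_restrict measurableSet_Ioi] with y hy
      have hcy : 0 < s * (b * y + a) := by have : (0:ℝ) < y := hy; positivity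
      have h1 : 0 < Real.exp (-(s * (b * y + a))) := Real.exp_pos _
      have h2 : Real.exp (-(s * (b * y + a))) ≤ 1 := Real.exp_le_one_iff.mpr (by linarith)
      rw [Real.norm_eq_abs, Real.norm_eq_abs, abs_of_nonneg (Real.exp_pos _).le,
        abs_of_nonneg (by nlinarith [Real.exp_pos (-y)])]
      nlinarith [Real.exp_pos (-y)]
  rw [← ofReal_integral_eq_lintegral_ofReal hint ?hnn]
  case hnn =>
    filter_upwards [self_mem_ae_restrict measurableSet_Ioi] with y hy
    have hcy : 0 < s * (b * y + a) := by have : (0:ℝ) < y := hy; positivity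
    have h2 : Real.exp (-(s * (b * y + a))) ≤ 1 := Real.exp_le_one_iff.mpr (by linarith)
    simp only [Pi.zero_apply]
    nlinarith [Real.exp_pos (-y)]
  congr 1
  have hre : ∀ y : ℝ, (1 - Real.exp (-(s * (b * y + a)))) * Real.exp (-y)
      = Real.exp (-y) - Real.exp (-(a * s)) * Real.exp (-((1 + b * s) * y)) := by
    intro y
    rw [sub_mul, one_mul, ← Real.exp_add, ← Real.exp_add]
    ring_nf
  simp_rw [hre]
  have hint2 : IntegrableOn (fun y => Real.exp (-(a*s)) * Real.exp (-((1 + b * s) * y)))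
      (Ioi (0:ℝ)) := by
    apply Integrable.const_mul
    simpa only [neg_mul] using (exp_neg_integrableOn_Ioi (a := 0) (b := 1 + b * s) (by positivity)).integrable
  rw [integral_sub hexp_int hint2, integral_exp_neg_Ioi_zero, MeasureTheory.integral_const_mul,
    integral_exp_neg_mul_Ioi (by positivity : (0:ℝ) < 1 + b * s)]
  ring

lemma prod_diag_null (a b s : ℝ) :
    ((expMeasure 1).prod (expMeasure 1)) {p : ℝ × ℝ | p.2 = s * (b * p.1 + a)} = 0 := by
  have hprob : IsProbabilityMeasure (expMeasure 1) := isProbabilityMeasure_expMeasure one_pos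
  have hset : MeasurableSet {p : ℝ × ℝ | p.2 = s * (b * p.1 + a)} :=
    measurableSet_eq_fun measurable_snd (by fun_prop)
  rw [Measure.prod_apply hset]
  have hsec : ∀ y : ℝ, (Prod.mk y ⁻¹' {p : ℝ × ℝ | p.2 = s * (b * p.1 + a)}) =
      {s * (b * y + a)} := fun y => rfl
  simp_rw [hsec, expMeasure_singleton, lintegral_zero]

section Plevel
variable {Ω : Type*} [MeasurableSpace Ω] (P : Measure Ω) [IsProbabilityMeasure P]
  (X Y : Ω → ℝ) (hXm : Measurable X) (hYm : Measurable Y) (hXY : IndepFun X Y P)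
  (hX : Measure.map X P = expMeasure 1) (hY : Measure.map Y P = expMeasure 1)

include hXm hYm hXY hX hY

lemma P_eq_null (a b s : ℝ) : P {ω | X ω = s * (b * Y ω + a)} = 0 := by
  have hmap : P.map (fun ω => (Y ω, X ω)) = (expMeasure 1).prod (expMeasure 1) := by
    rw [(indepFun_iff_map_prod_eq_prod_map_map hYm.aemeasurable hXm.aemeasurable).mp
      hXY.symm, hX, hY]
  have hset : MeasurableSet {p : ℝ × ℝ | p.2 = s * (b * p.1 + a)} :=
    measurableSet_eq_fun measurable_snd (by fun_prop)
  have : {ω | X ω = s * (b * Y ω + a)} =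
      (fun ω => (Y ω, X ω)) ⁻¹' {p : ℝ × ℝ | p.2 = s * (b * p.1 + a)} := rfl
  rw [this, ← Measure.map_apply (hYm.prodMk hXm) hset, hmap, prod_diag_null]

lemma P_cdf {a b s : ℝ} (ha : 0 < a) (hb : 0 < b) (hs : 0 < s) :
    P {ω | X ω ≤ s * (b * Y ω + a)}
      = ENNReal.ofReal (1 - Real.exp (-(a * s)) / (1 + b * s)) := by
  have hmap : P.map (fun ω => (Y ω, X ω)) = (expMeasure 1).prod (expMeasure 1) := by
    rw [(indepFun_iff_map_prod_eq_prod_map_map hYm.aemeasurable hXm.aemeasurable).mp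
      hXY.symm, hX, hY]
  have hset : MeasurableSet {p : ℝ × ℝ | p.2 ≤ s * (b * p.1 + a)} :=
    measurableSet_le measurable_snd (by fun_prop)
  have : {ω | X ω ≤ s * (b * Y ω + a)} =
      (fun ω => (Y ω, X ω)) ⁻¹' {p : ℝ × ℝ | p.2 ≤ s * (b * p.1 + a)} := rfl
  rw [this, ← Measure.map_apply (hYm.prodMk hXm) hset, hmap, prod_cdf ha hb hs]

lemma P_cdf_lt {a b s : ℝ} (ha : 0 < a) (hb : 0 < b) (hs : 0 < s) :
    P {ω | X ω < s * (b * Y ω + a)}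
      = ENNReal.ofReal (1 - Real.exp (-(a * s)) / (1 + b * s)) := by
  rw [← P_cdf P X Y hXm hYm hXY hX hY ha hb hs]
  apply measure_congr
  have hne : ∀ᵐ ω ∂P, X ω ≠ s * (b * Y ω + a) := by
    rw [ae_iff]
    simpa using P_eq_null P X Y hXm hYm hXY hX hY a b s
  filter_upwards [hne] with ω hω
  simp only [Set.mem_setOf_eq, eq_iff_iff]
  exact ⟨le_of_lt, fun h => lt_of_le_of_ne h hω⟩

end Plevel

noncomputable def hazF (A b' t : ℝ) : ℝ := 1 - Real.exp (-(A * t)) / (1 + b' * t)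

lemma hasDerivAt_hazF {A b' s : ℝ} (hne : 1 + b' * s ≠ 0) :
    HasDerivAt (hazF A b') (Real.exp (-(A * s)) * (A * (1 + b' * s) + b') / (1 + b' * s) ^ 2) s := by
  have hnum : HasDerivAt (fun t => Real.exp (-(A * t))) (-A * Real.exp (-(A * s))) s := by
    have h1 : HasDerivAt (fun t : ℝ => -(A * t)) (-A) s := by
      simpa using ((hasDerivAt_id s).const_mul A).fun_neg
    simpa [mul_comm] using h1.exp
  have hden : HasDerivAt (fun t => 1 + b' * t) b' s := by
    simpa using ((hasDerivAt_id s).const_mul b').const_add 1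
  have hdiv := hnum.div hden hne
  have := (hasDerivAt_const s (1:ℝ)).sub hdiv
  replace this : HasDerivAt (hazF A b') _ s := this
  convert this using 1
  field_simp
  ring

lemma haz_deriv_chain {A b' D B τ0 γV DV : ℝ}
    (hA : 0 < A) (hb' : 0 < b') (hD : 0 < D) (hB : 0 < B) (hτ0 : 0 < τ0)
    (hγV : γV = (2 : ℝ) ^ (D / (B * τ0)) - 1)
    (hDV : DV = Real.log 2 * D * (2 : ℝ) ^ (D / (B * τ0)) / (B * τ0 ^ 2)) :
    HasDerivAt (fun t => hazF A b' ((2 : ℝ) ^ (D / (B * (τ0 + t))) - 1))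
      (-(DV * (Real.exp (-(A * γV)) * (A * (1 + b' * γV) + b') / (1 + b' * γV) ^ 2))) 0 := by
  have hw : HasDerivAt (fun t : ℝ => B * (τ0 + t)) B 0 := by
    simpa using ((hasDerivAt_id 0).const_add τ0).const_mul B
  have hwne : B * (τ0 + 0) ≠ 0 := by positivity
  have hv : HasDerivAt (fun t : ℝ => D / (B * (τ0 + t)))
      (-(D * B) / (B * (τ0 + 0)) ^ 2) 0 := by
    have := (hasDerivAt_const (0:ℝ) D).div hw hwne
    replace this : HasDerivAt (fun t : ℝ => D / (B * (τ0 + t))) _ (0:ℝ) := this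
    convert this using 1
    ring
  have hr : HasDerivAt (fun t : ℝ => (2 : ℝ) ^ (D / (B * (τ0 + t))) - 1)
      ((2 : ℝ) ^ (D / (B * (τ0 + 0))) * Real.log 2 * (-(D * B) / (B * (τ0 + 0)) ^ 2)) 0 := by
    have hc := (hasStrictDerivAt_const_rpow two_pos (D / (B * (τ0 + 0)))).hasDerivAt
    have := (HasDerivAt.comp 0 hc hv).sub_const 1
    simpa [mul_assoc] using this
  have hγVval : (2 : ℝ) ^ (D / (B * (τ0 + 0))) - 1 = γV := by rw [add_zero, hγV]
  have hne : 1 + b' * γV ≠ 0 := by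
    have : 0 < γV := by
      rw [hγV]
      have : (1:ℝ) < (2:ℝ) ^ (D / (B * τ0)) := by
        rw [show (1:ℝ) = (2:ℝ) ^ (0:ℝ) by simp]
        exact Real.rpow_lt_rpow_left_iff one_lt_two |>.mpr (by positivity)
      linarith
    positivity
  have hF := hasDerivAt_hazF (A := A) (b' := b') (s := γV) hne
  rw [show γV = (2:ℝ) ^ (D / (B * (τ0 + (0:ℝ)))) - 1 by rw [add_zero, hγV]] at hF
  have hcomp := HasDerivAt.comp 0 hF hr
  replace hcomp : HasDerivAt (fun t => hazF A b' ((2 : ℝ) ^ (D / (B * (τ0 + t))) - 1)) _ (0:ℝ) := hcomp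
  convert hcomp using 1
  rw [hDV, add_zero, hγV]
  have h2 : (0:ℝ) < (2:ℝ) ^ (D / (B * τ0)) := by positivity
  have hbne : 1 + b' * ((2:ℝ) ^ (D / (B * τ0)) - 1) ≠ 0 := by rw [← hγV]; exact hne
  field_simp

lemma gammaV_pos {D B τ0 : ℝ} (hD : 0 < D) (hB : 0 < B) (hτ0 : 0 < τ0) :
    0 < (2 : ℝ) ^ (D / (B * τ0)) - 1 := by
  have : (1:ℝ) < (2:ℝ) ^ (D / (B * τ0)) := by
    rw [show (1:ℝ) = (2:ℝ) ^ (0:ℝ) by simp]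
    exact Real.rpow_lt_rpow_left_iff one_lt_two |>.mpr (by positivity)
  linarith

lemma haz_tendsto {A b' D B τ0 γV DV : ℝ}
    (hA : 0 < A) (hb' : 0 < b') (hD : 0 < D) (hB : 0 < B) (hτ0 : 0 < τ0)
    (hγV : γV = (2 : ℝ) ^ (D / (B * τ0)) - 1)
    (hDV : DV = Real.log 2 * D * (2 : ℝ) ^ (D / (B * τ0)) / (B * τ0 ^ 2)) :
    Tendsto (fun Δτ : ℝ =>
        (hazF A b' γV - hazF A b' ((2 : ℝ) ^ (D / (B * (τ0 + Δτ))) - 1))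
          / (Δτ * hazF A b' γV)) (𝓝[>] 0)
      (𝓝 (DV * Real.exp (-(A * γV)) * (b' + A * (1 + b' * γV))
        / ((1 + b' * γV) * (1 + b' * γV - Real.exp (-(A * γV)))))) := by
  have hγVpos : 0 < γV := hγV ▸ gammaV_pos hD hB hτ0
  have hdena : (0:ℝ) < 1 + b' * γV := by positivity
  have hexplt : Real.exp (-(A * γV)) < 1 := by
    rw [Real.exp_lt_one_iff]
    nlinarith
  have hexppos : (0:ℝ) < Real.exp (-(A * γV)) := Real.exp_pos _
  have hFpos : 0 < hazF A b' γV := by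
    rw [hazF]
    have : Real.exp (-(A * γV)) / (1 + b' * γV) < 1 := by
      rw [div_lt_one hdena]; nlinarith
    linarith
  have hd := haz_deriv_chain hA hb' hD hB hτ0 hγV hDV
  have hslope := hasDerivAt_iff_tendsto_slope.mp hd
  have hmono : 𝓝[>] (0:ℝ) ≤ 𝓝[≠] (0:ℝ) :=
    nhdsWithin_mono 0 (fun x hx => ne_of_gt hx)
  have h2 := ((hslope.mono_left hmono).neg).div_const (hazF A b' γV)
  have hh0 : (fun t : ℝ => hazF A b' ((2 : ℝ) ^ (D / (B * (τ0 + t))) - 1)) 0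
      = hazF A b' γV := by norm_num [hγV]
  have hkey : 0 < 1 + b' * γV - Real.exp (-(A * γV)) := by nlinarith
  have hval : - -(DV * (Real.exp (-(A * γV)) * (A * (1 + b' * γV) + b') / (1 + b' * γV) ^ 2))
      / hazF A b' γV
      = DV * Real.exp (-(A * γV)) * (b' + A * (1 + b' * γV))
        / ((1 + b' * γV) * (1 + b' * γV - Real.exp (-(A * γV)))) := by
    have hFne : hazF A b' γV ≠ 0 := ne_of_gt hFpos
    rw [neg_neg]
    rw [show hazF A b' γV = (1 + b' * γV - Real.exp (-(A * γV))) / (1 + b' * γV) by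
      simp only [hazF]; field_simp]
    field_simp
    ring
  rw [← hval]
  refine h2.congr fun t => ?_
  rw [slope_def_field, show (2:ℝ) ^ (D / (B * (τ0 + (0:ℝ)))) - 1 = γV by rw [add_zero, hγV],
    sub_zero]
  ring

lemma tau_iff {pV LV pI LI σ2 D B : ℝ}
    (hpV : 0 < pV) (hLV : 0 < LV) (hpI : 0 < pI) (hLI : 0 < LI) (hσ2 : 0 < σ2)
    (hD : 0 < D) (hB : 0 < B) (x y t : ℝ) (hx : 0 < x) (hy : 0 < y) (ht : 0 < t) :
    (t ≤ D / (B * Real.logb 2 (1 + pV * LV * x / (pI * LI * y + σ2)))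
      ↔ x ≤ ((2:ℝ) ^ (D / (B * t)) - 1) * (pI * LI / (pV * LV) * y + σ2 / (pV * LV)))
    ∧ (D / (B * Real.logb 2 (1 + pV * LV * x / (pI * LI * y + σ2))) ≤ t
      ↔ ((2:ℝ) ^ (D / (B * t)) - 1) * (pI * LI / (pV * LV) * y + σ2 / (pV * LV)) ≤ x) := by
  have hpvlv : (0:ℝ) < pV * LV := by positivity
  have hden : (0:ℝ) < pI * LI * y + σ2 := by positivity
  have hg : (0:ℝ) < pV * LV * x / (pI * LI * y + σ2) := by positivity
  set g := pV * LV * x / (pI * LI * y + σ2) with hgdef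
  have hL : 0 < Real.logb 2 (1 + g) := Real.logb_pos one_lt_two (by linarith)
  have hrw : ∀ c : ℝ, c * (pI * LI / (pV * LV) * y + σ2 / (pV * LV))
      = c * (pI * LI * y + σ2) / (pV * LV) := by intro c; field_simp
  have key_le : ∀ c : ℝ, (g ≤ c ↔ x ≤ c * (pI * LI / (pV * LV) * y + σ2 / (pV * LV))) := by
    intro c
    rw [hgdef, div_le_iff₀ hden, hrw, le_div_iff₀ hpvlv, mul_comm x (pV * LV)]
  have key_ge : ∀ c : ℝ, (c ≤ g ↔ c * (pI * LI / (pV * LV) * y + σ2 / (pV * LV)) ≤ x) := by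
    intro c
    rw [hgdef, le_div_iff₀ hden, hrw, div_le_iff₀ hpvlv, mul_comm x (pV * LV)]
  constructor
  · rw [le_div_iff₀ (by positivity : (0:ℝ) < B * Real.logb 2 (1 + g)),
      show t * (B * Real.logb 2 (1 + g)) ≤ D
        ↔ Real.logb 2 (1 + g) ≤ D / (B * t) by
          rw [le_div_iff₀ (by positivity : (0:ℝ) < B * t)]
          constructor <;> intro h <;> nlinarith,
      Real.logb_le_iff_le_rpow one_lt_two (by linarith : (0:ℝ) < 1 + g),
      show (1 + g ≤ (2:ℝ) ^ (D / (B * t))) ↔ g ≤ (2:ℝ) ^ (D / (B * t)) - 1 by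
        constructor <;> intro h <;> linarith]
    exact key_le _
  · rw [div_le_iff₀ (by positivity : (0:ℝ) < B * Real.logb 2 (1 + g)),
      show D ≤ t * (B * Real.logb 2 (1 + g))
        ↔ D / (B * t) ≤ Real.logb 2 (1 + g) by
          rw [div_le_iff₀ (by positivity : (0:ℝ) < B * t)]
          constructor <;> intro h <;> nlinarith,
      Real.le_logb_iff_rpow_le one_lt_two (by linarith : (0:ℝ) < 1 + g),
      show ((2:ℝ) ^ (D / (B * t)) ≤ 1 + g) ↔ (2:ℝ) ^ (D / (B * t)) - 1 ≤ g by
        constructor <;> intro h <;> linarith]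
    exact key_ge _

lemma hazF_pos {A b' t : ℝ} (hA : 0 < A) (hb' : 0 < b') (ht : 0 < t) :
    0 < hazF A b' t := by
  have h1 : (0:ℝ) < 1 + b' * t := by positivity
  have h2 : Real.exp (-(A * t)) < 1 := by rw [Real.exp_lt_one_iff]; nlinarith
  have : Real.exp (-(A * t)) / (1 + b' * t) < 1 := by rw [div_lt_one h1]; nlinarith
  rw [hazF]; linarith

lemma hazF_mono {A b' s t : ℝ} (hA : 0 < A) (hb' : 0 < b') (hs : 0 < s) (hst : s ≤ t) :
    hazF A b' s ≤ hazF A b' t := by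
  simp only [hazF]
  have : Real.exp (-(A * t)) / (1 + b' * t) ≤ Real.exp (-(A * s)) / (1 + b' * s) := by
    apply div_le_div₀ (Real.exp_pos _).le (Real.exp_le_exp.mpr (by nlinarith)) (by positivity)
      (by nlinarith)
  linarith

/-- For independent rate-1 exponential `X, Y`, SINR
`γ = pV LV X / (pI LI Y + σ²)` and delay `τ = D / (B log₂ (1 + γ))`, the hazard rate
`Λ(τ₀) = lim_{Δτ→0⁺} P{τ₀ ≤ τ ≤ τ₀ + Δτ} / (Δτ · P{τ ≥ τ₀})` exists and equals
`D_V e^{−a γ_V} (b + a(1 + b γ_V)) / ((1 + b γ_V)(1 + b γ_V − e^{−a γ_V}))`. -/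
theorem hazard_rate_v2v
    {Ω : Type*} [MeasurableSpace Ω] (P : Measure Ω) [IsProbabilityMeasure P]
    (X Y : Ω → ℝ) (hXY : IndepFun X Y P)
    (hX : Measure.map X P = expMeasure 1) (hY : Measure.map Y P = expMeasure 1)
    (pV LV pI LI σ2 D B τ0 : ℝ)
    (hpV : 0 < pV) (hLV : 0 < LV) (hpI : 0 < pI) (hLI : 0 < LI) (hσ2 : 0 < σ2)
    (hD : 0 < D) (hB : 0 < B) (hτ0 : 0 < τ0)
    -- the SINR and the delay
    (γ : Ω → ℝ) (hγ : γ = fun ω => pV * LV * X ω / (pI * LI * Y ω + σ2))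
    (τ : Ω → ℝ) (hτ : τ = fun ω => D / (B * Real.logb 2 (1 + γ ω)))
    -- abbreviations
    (A b' γV DV : ℝ)
    (hA : A = σ2 / (pV * LV)) (hb' : b' = pI * LI / (pV * LV))
    (hγV : γV = (2 : ℝ) ^ (D / (B * τ0)) - 1)
    (hDV : DV = Real.log 2 * D * (2 : ℝ) ^ (D / (B * τ0)) / (B * τ0 ^ 2)) :
    Tendsto
      (fun Δτ : ℝ =>
        (P {ω | τ0 ≤ τ ω ∧ τ ω ≤ τ0 + Δτ}).toReal
          / (Δτ * (P {ω | τ0 ≤ τ ω}).toReal))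
      (𝓝[>] 0)
      (𝓝 (DV * Real.exp (-(A * γV)) * (b' + A * (1 + b' * γV))
        / ((1 + b' * γV) * (1 + b' * γV - Real.exp (-(A * γV)))))) := by
  have hPexp : IsProbabilityMeasure (expMeasure 1) := isProbabilityMeasure_expMeasure one_pos
  have hexpne : (expMeasure 1 : Measure ℝ) ≠ 0 := by
    intro h
    have := hPexp.measure_univ
    rw [h] at this
    simp at this
  have hXae : AEMeasurable X P := aemeasurable_of_map_neZero (by rw [hX]; exact ⟨hexpne⟩)
  have hYae : AEMeasurable Y P := aemeasurable_of_map_neZero (by rw [hY]; exact ⟨hexpne⟩)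
  set X' : Ω → ℝ := hXae.mk X with hX'def
  set Y' : Ω → ℝ := hYae.mk Y with hY'def
  have hX'm : Measurable X' := hXae.measurable_mk
  have hY'm : Measurable Y' := hYae.measurable_mk
  have hXX' : X =ᵐ[P] X' := hXae.ae_eq_mk
  have hYY' : Y =ᵐ[P] Y' := hYae.ae_eq_mk
  have hX' : Measure.map X' P = expMeasure 1 := by rw [← Measure.map_congr hXX']; exact hX
  have hY' : Measure.map Y' P = expMeasure 1 := by rw [← Measure.map_congr hYY']; exact hY
  have hXY' : IndepFun X' Y' P := hXY.congr hXX' hYY'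
  have hApos : 0 < A := by rw [hA]; positivity
  have hbpos : 0 < b' := by rw [hb']; positivity
  have hXpos : ∀ᵐ ω ∂P, 0 < X' ω := by
    rw [ae_iff]
    have h1 : {ω | ¬ 0 < X' ω} = X' ⁻¹' (Iic 0) := by ext ω; simp [not_lt]
    rw [h1, ← Measure.map_apply hX'm measurableSet_Iic, hX', expMeasure_Iic]
    norm_num
  have hYpos : ∀ᵐ ω ∂P, 0 < Y' ω := by
    rw [ae_iff]
    have h1 : {ω | ¬ 0 < Y' ω} = Y' ⁻¹' (Iic 0) := by ext ω; simp [not_lt]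
    rw [h1, ← Measure.map_apply hY'm measurableSet_Iic, hY', expMeasure_Iic]
    norm_num
  simp only [hτ, hγ]
  -- value of the denominator event
  have hE0 : (P {ω | τ0 ≤ D / (B * Real.logb 2 (1 + pV * LV * X ω / (pI * LI * Y ω + σ2)))}).toReal
      = hazF A b' γV := by
    have hseq : {ω | τ0 ≤ D / (B * Real.logb 2 (1 + pV * LV * X ω / (pI * LI * Y ω + σ2)))}
        =ᵐ[P] {ω | X' ω ≤ ((2:ℝ) ^ (D / (B * τ0)) - 1)
          * (pI * LI / (pV * LV) * Y' ω + σ2 / (pV * LV))} := by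
      apply Filter.eventuallyEq_set.mpr
      filter_upwards [hXX', hYY', hXpos, hYpos] with ω hxe hye hxp hyp
      show _ ↔ X' ω ≤ _
      rw [hxe, hye]
      exact (tau_iff hpV hLV hpI hLI hσ2 hD hB (X' ω) (Y' ω) τ0 hxp hyp hτ0).1
    rw [measure_congr hseq,
      P_cdf P X' Y' hX'm hY'm hXY' hX' hY' (by positivity) (by positivity)
        (gammaV_pos hD hB hτ0),
      ENNReal.toReal_ofReal ?_]
    · rw [hazF, hA, hb', hγV]
    · have := hazF_pos (A := σ2 / (pV * LV)) (b' := pI * LI / (pV * LV))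
        (t := (2:ℝ) ^ (D / (B * τ0)) - 1) (by positivity) (by positivity)
        (gammaV_pos hD hB hτ0)
      rw [hazF] at this
      linarith
  -- value of the numerator event
  have hE1 : ∀ Δτ : ℝ, 0 < Δτ →
      (P {ω | τ0 ≤ D / (B * Real.logb 2 (1 + pV * LV * X ω / (pI * LI * Y ω + σ2)))
          ∧ D / (B * Real.logb 2 (1 + pV * LV * X ω / (pI * LI * Y ω + σ2))) ≤ τ0 + Δτ}).toReal
      = hazF A b' γV - hazF A b' ((2:ℝ) ^ (D / (B * (τ0 + Δτ))) - 1) := by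
    intro Δτ hΔτ
    have hs1pos : 0 < (2:ℝ) ^ (D / (B * (τ0 + Δτ))) - 1 := gammaV_pos hD hB (by linarith)
    have hs1le : (2:ℝ) ^ (D / (B * (τ0 + Δτ))) - 1 ≤ (2:ℝ) ^ (D / (B * τ0)) - 1 := by
      have hexp : D / (B * (τ0 + Δτ)) ≤ D / (B * τ0) := by
        apply div_le_div_of_nonneg_left hD.le (by positivity) (by nlinarith)
      exact sub_le_sub_right ((Real.rpow_le_rpow_left_iff one_lt_two).mpr hexp) 1
    set SA := {ω | X' ω ≤ ((2:ℝ) ^ (D / (B * τ0)) - 1)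
        * (pI * LI / (pV * LV) * Y' ω + σ2 / (pV * LV))} ∩ {ω | 0 < Y' ω} with hSA
    set SB := {ω | X' ω < ((2:ℝ) ^ (D / (B * (τ0 + Δτ))) - 1)
        * (pI * LI / (pV * LV) * Y' ω + σ2 / (pV * LV))} ∩ {ω | 0 < Y' ω} with hSB
    have hSBm : MeasurableSet SB :=
      (measurableSet_lt hX'm (by fun_prop)).inter (measurableSet_lt measurable_const hY'm)
    have hsub : SB ⊆ SA := by
      rintro ω ⟨h1, h2⟩
      have hy : 0 < Y' ω := h2
      have h1' : X' ω < ((2:ℝ) ^ (D / (B * (τ0 + Δτ))) - 1)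
          * (pI * LI / (pV * LV) * Y' ω + σ2 / (pV * LV)) := h1
      have hfac : 0 < pI * LI / (pV * LV) * Y' ω + σ2 / (pV * LV) := by positivity
      exact ⟨Set.mem_setOf_eq ▸ (by nlinarith :
        X' ω ≤ ((2:ℝ) ^ (D / (B * τ0)) - 1)
          * (pI * LI / (pV * LV) * Y' ω + σ2 / (pV * LV))), h2⟩
    have hseq : {ω | τ0 ≤ D / (B * Real.logb 2 (1 + pV * LV * X ω / (pI * LI * Y ω + σ2)))
          ∧ D / (B * Real.logb 2 (1 + pV * LV * X ω / (pI * LI * Y ω + σ2))) ≤ τ0 + Δτ}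
        =ᵐ[P] (SA \ SB : Set Ω) := by
      apply Filter.eventuallyEq_set.mpr
      filter_upwards [hXX', hYY', hXpos, hYpos] with ω hxe hye hxp hyp
      simp only [hSA, hSB, Set.mem_diff, Set.mem_inter_iff, Set.mem_setOf_eq]
      rw [hxe, hye]
      rw [(tau_iff hpV hLV hpI hLI hσ2 hD hB (X' ω) (Y' ω) τ0 hxp hyp hτ0).1,
        (tau_iff hpV hLV hpI hLI hσ2 hD hB (X' ω) (Y' ω) (τ0 + Δτ) hxp hyp (by linarith)).2]
      constructor
      · rintro ⟨h1, h2⟩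
        exact ⟨⟨h1, hyp⟩, fun hB => absurd hB.1 (not_lt.mpr h2)⟩
      · rintro ⟨⟨h1, -⟩, h2⟩
        exact ⟨h1, le_of_not_gt fun hlt => h2 ⟨hlt, hyp⟩⟩
    have hPSA : P SA = ENNReal.ofReal (1 - Real.exp (-(σ2 / (pV * LV)
        * ((2:ℝ) ^ (D / (B * τ0)) - 1)))
        / (1 + pI * LI / (pV * LV) * ((2:ℝ) ^ (D / (B * τ0)) - 1))) := by
      have h2 : SA =ᵐ[P] {ω | X' ω ≤ ((2:ℝ) ^ (D / (B * τ0)) - 1)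
          * (pI * LI / (pV * LV) * Y' ω + σ2 / (pV * LV))} := by
        apply Filter.eventuallyEq_set.mpr
        filter_upwards [hYpos] with ω hy
        simp only [hSA, Set.mem_inter_iff, Set.mem_setOf_eq, hy, and_true]
      rw [measure_congr h2, P_cdf P X' Y' hX'm hY'm hXY' hX' hY' (by positivity) (by positivity)
        (gammaV_pos hD hB hτ0)]
    have hPSB : P SB = ENNReal.ofReal (1 - Real.exp (-(σ2 / (pV * LV)
        * ((2:ℝ) ^ (D / (B * (τ0 + Δτ))) - 1)))
        / (1 + pI * LI / (pV * LV) * ((2:ℝ) ^ (D / (B * (τ0 + Δτ))) - 1))) := by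
      have h2 : SB =ᵐ[P] {ω | X' ω < ((2:ℝ) ^ (D / (B * (τ0 + Δτ))) - 1)
          * (pI * LI / (pV * LV) * Y' ω + σ2 / (pV * LV))} := by
        apply Filter.eventuallyEq_set.mpr
        filter_upwards [hYpos] with ω hy
        simp only [hSB, Set.mem_inter_iff, Set.mem_setOf_eq, hy, and_true]
      rw [measure_congr h2, P_cdf_lt P X' Y' hX'm hY'm hXY' hX' hY' (by positivity) (by positivity)
        hs1pos]
    have hBle : (1 : ℝ) - Real.exp (-(σ2 / (pV * LV) * ((2:ℝ) ^ (D / (B * (τ0 + Δτ))) - 1)))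
        / (1 + pI * LI / (pV * LV) * ((2:ℝ) ^ (D / (B * (τ0 + Δτ))) - 1))
        ≤ 1 - Real.exp (-(σ2 / (pV * LV) * ((2:ℝ) ^ (D / (B * τ0)) - 1)))
        / (1 + pI * LI / (pV * LV) * ((2:ℝ) ^ (D / (B * τ0)) - 1)) := by
      have := hazF_mono (A := σ2 / (pV * LV)) (b' := pI * LI / (pV * LV))
        (by positivity) (by positivity) hs1pos hs1le
      rw [hazF, hazF] at this
      exact this
    have hBnn : 0 ≤ (1 : ℝ) - Real.exp (-(σ2 / (pV * LV) * ((2:ℝ) ^ (D / (B * (τ0 + Δτ))) - 1)))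
        / (1 + pI * LI / (pV * LV) * ((2:ℝ) ^ (D / (B * (τ0 + Δτ))) - 1)) := by
      have := hazF_pos (A := σ2 / (pV * LV)) (b' := pI * LI / (pV * LV))
        (by positivity) (by positivity) hs1pos
      rw [hazF] at this
      linarith
    rw [measure_congr hseq, measure_diff hsub hSBm.nullMeasurableSet (measure_ne_top P _),
      hPSA, hPSB, ← ENNReal.ofReal_sub _ hBnn, ENNReal.toReal_ofReal (by linarith)]
    rw [hazF, hazF, hA, hb', hγV]
  refine Tendsto.congr' ?_ (haz_tendsto hApos hbpos hD hB hτ0 hγV hDV)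
  filter_upwards [self_mem_nhdsWithin] with Δτ hΔτ
  rw [hE0, hE1 Δτ hΔτ]
end

section
/- Let λ > 0 and D > 0, and define û(x) = −(ln D)/(λx) + (1/(λx) − x)·ln(x + √(x² + D²)) for x > 0. If for all x > 0 the condition x/√(x² + D²) − ln((x + √(x² + D²))/D) − λx²·ln(x + √(x² + D²)) ≤ 0 holds, then û is antitone on (0, ∞), i.e. for all 0 < x₁ ≤ x₂ one has û(x₂) ≤ û(x₁). Equivalently, the function c ↦ û(1/c) is monotonically increasing on (0, ∞). -/
open Real Set

/-- For `λ, D > 0`, let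
`û(x) = −(ln D)/(λx) + (1/(λx) − x) ln(x + √(x² + D²))`. If for all `x > 0`
`x/√(x² + D²) − ln((x + √(x² + D²))/D) − λx² ln(x + √(x² + D²)) ≤ 0`,
then `û` is antitone on `(0, ∞)`; equivalently, `c ↦ û(1/c)` is monotone on `(0, ∞)`. -/
theorem uhat_antitoneOn
    (lam D : ℝ) (hlam : 0 < lam) (hD : 0 < D)
    (uhat : ℝ → ℝ)
    (huhat : uhat = fun x =>
      -(Real.log D) / (lam * x)
        + (1 / (lam * x) - x) * Real.log (x + Real.sqrt (x ^ 2 + D ^ 2)))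
    (hcond : ∀ x : ℝ, 0 < x →
      x / Real.sqrt (x ^ 2 + D ^ 2)
        - Real.log ((x + Real.sqrt (x ^ 2 + D ^ 2)) / D)
        - lam * x ^ 2 * Real.log (x + Real.sqrt (x ^ 2 + D ^ 2)) ≤ 0) :
    AntitoneOn uhat (Set.Ioi (0 : ℝ))
      ∧ MonotoneOn (fun c => uhat (1 / c)) (Set.Ioi (0 : ℝ)) := by
  -- the clean form of the derivative
  have hder : ∀ x : ℝ, 0 < x → HasDerivAt uhat
      ((x / Real.sqrt (x ^ 2 + D ^ 2)
        - (Real.log (x + Real.sqrt (x ^ 2 + D ^ 2)) - Real.log D)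
        - lam * x ^ 2 * Real.log (x + Real.sqrt (x ^ 2 + D ^ 2))
        - lam * x ^ 3 / Real.sqrt (x ^ 2 + D ^ 2)) / (lam * x ^ 2)) x := by
    intro x hx0
    have hsum : (0:ℝ) < x ^ 2 + D ^ 2 := by positivity
    have hs0 : 0 < Real.sqrt (x ^ 2 + D ^ 2) := Real.sqrt_pos.mpr hsum
    set s := Real.sqrt (x ^ 2 + D ^ 2) with hs
    have hxs : 0 < x + s := by linarith
    have hlx : lam * x ≠ 0 := by positivity
    have h1 : HasDerivAt (fun y : ℝ => y ^ 2 + D ^ 2) (2 * x) x := by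
      simpa using (hasDerivAt_pow 2 x).add_const (D ^ 2)
    have hsq : HasDerivAt (fun y : ℝ => Real.sqrt (y ^ 2 + D ^ 2)) (2 * x / (2 * s)) x :=
      h1.sqrt (by positivity)
    have hinner : HasDerivAt (fun y : ℝ => y + Real.sqrt (y ^ 2 + D ^ 2))
        (1 + 2 * x / (2 * s)) x := (hasDerivAt_id x).add hsq
    have hlog : HasDerivAt (fun y : ℝ => Real.log (y + Real.sqrt (y ^ 2 + D ^ 2)))
        ((1 + 2 * x / (2 * s)) / (x + s)) x := hinner.log (ne_of_gt hxs)
    have hden : HasDerivAt (fun y : ℝ => lam * y) lam x := by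
      simpa using (hasDerivAt_id x).const_mul lam
    have hA : HasDerivAt (fun y : ℝ => -Real.log D / (lam * y))
        ((0 * (lam * x) - -Real.log D * lam) / (lam * x) ^ 2) x :=
      (hasDerivAt_const x (-Real.log D)).div hden hlx
    have hB : HasDerivAt (fun y : ℝ => 1 / (lam * y) - y)
        ((0 * (lam * x) - 1 * lam) / (lam * x) ^ 2 - 1) x :=
      ((hasDerivAt_const x (1:ℝ)).div hden hlx).sub (hasDerivAt_id x)
    have hU := hA.add (hB.mul hlog)
    rw [huhat]
    convert hU using 1
    · rfl
    · rfl
    · rfl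
    have hsne : s ≠ 0 := ne_of_gt hs0
    have hxne : x ≠ 0 := ne_of_gt hx0
    have hlamne : lam ≠ 0 := ne_of_gt hlam
    have hxsne : x + s ≠ 0 := ne_of_gt hxs
    field_simp
    ring
  have hderivnp : ∀ x ∈ interior (Set.Ioi (0:ℝ)), deriv uhat x ≤ 0 := by
    intro x hx
    rw [interior_Ioi] at hx
    have hx0 : (0:ℝ) < x := hx
    rw [(hder x hx0).deriv]
    have hsum : (0:ℝ) < x ^ 2 + D ^ 2 := by positivity
    have hs0 : 0 < Real.sqrt (x ^ 2 + D ^ 2) := Real.sqrt_pos.mpr hsum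
    have hxs : 0 < x + Real.sqrt (x ^ 2 + D ^ 2) := by linarith
    have hcx := hcond x hx0
    rw [Real.log_div (ne_of_gt hxs) (ne_of_gt hD)] at hcx
    apply div_nonpos_of_nonpos_of_nonneg
    · have h2 : 0 ≤ lam * x ^ 3 / Real.sqrt (x ^ 2 + D ^ 2) := by positivity
      linarith
    · positivity
  have hdiff : DifferentiableOn ℝ uhat (Set.Ioi (0:ℝ)) := by
    intro x hx
    exact ((hder x hx).differentiableAt).differentiableWithinAt
  have hanti : AntitoneOn uhat (Set.Ioi (0:ℝ)) := by
    apply antitoneOn_of_deriv_nonpos (convex_Ioi 0) hdiff.continuousOn _ hderivnp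
    rw [interior_Ioi]
    exact hdiff.mono (by rfl)
  refine ⟨hanti, ?_⟩
  intro c₁ hc₁ c₂ hc₂ hle
  have hc₁0 : (0:ℝ) < c₁ := hc₁
  have hc₂0 : (0:ℝ) < c₂ := hc₂
  have h1 : (1:ℝ) / c₂ ≤ 1 / c₁ := one_div_le_one_div_of_le hc₁0 hle
  exact hanti (Set.mem_Ioi.mpr (by positivity)) (Set.mem_Ioi.mpr (by positivity)) h1
end
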